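/- arXiv:1612.02885 — 7 statements merged into one kernel-verified Lean document; each statement's English description precedes it below -/
import Mathlib

section
/- For any generalized category 𝒞, the flattening 𝒞_flat is an ordinary category: whenever [s(g)] = [t(f)] the composite g·f is defined in 𝒞, the composition (g)∘(f) := (g·f) is associative, and (1_f) is a two-sided identity on the object [f]. -/
universe u v w x

/-- A generalized category (Schoenbaum): a set with a partial order `le`,
source and target maps, a composition `comp a b` that is *defined*
(meaningful) exactly when `le (src a) (tgt b)`, and identities `one a`. -/
structure GenCat (C : Type u) where
  le : C → C → Prop
  src : C → C
  tgt : C → C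
  comp : C → C → C
  one : C → C
  le_refl : ∀ a, le a a
  le_trans : ∀ {a b c}, le a b → le b c → le a c
  le_antisymm : ∀ {a b}, le a b → le b a → a = b
  assoc : ∀ a b c,
      (le (src a) (tgt b) ∧ le (src (comp a b)) (tgt c)) ∨
      (le (src b) (tgt c) ∧ le (src a) (tgt (comp b c))) →
      comp (comp a b) c = comp a (comp b c)
  src_comp : ∀ a b, le (src a) (tgt b) → src (comp a b) = src b
  tgt_comp : ∀ a b, le (src a) (tgt b) → tgt (comp a b) = tgt a
  src_one : ∀ a, src (one a) = a
  tgt_one : ∀ a, tgt (one a) = a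
  one_comp : ∀ a c, le (src (one a)) (tgt c) → comp (one a) c = c
  comp_one : ∀ a c, le (src c) (tgt (one a)) → comp c (one a) = c
  obj_comp_right : ∀ a b, src a = a → tgt a = a → le (src b) (tgt a) → comp b a = b
  obj_comp_left : ∀ a b, src a = a → tgt a = a → le (src a) (tgt b) → comp a b = b
  le_src : ∀ {a b}, le a b → le (src a) (src b)
  le_tgt : ∀ {a b}, le a b → le (tgt a) (tgt b)
  le_one : ∀ {a b}, le a b → le (one a) (one b)
  le_comp : ∀ {a b c d}, le a b → le c d → le (src a) (tgt c) → le (src b) (tgt d) →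
      le (comp a c) (comp b d)

/-- The flattening `𝒞_flat` of a generalized category `𝒞` is an ordinary
category.  Objects are `[f]` for `f ∈ 𝒞`, morphisms are `(f) : [s f] → [t f]`
for `f ∈ 𝒞`, composition is `(g)∘(f) := (g·f)` when `[s g] = [t f]`, and the
identity on `[f]` is `(1_f)`.  Concretely: whenever `s(g) = t(f)` the
composite `g·f` is defined in `𝒞` and is again a morphism `[s f] → [t g]`,
composition is associative, and `(1_f)` is a two-sided identity on `[f]`. -/
theorem genCat_flat_is_category {C : Type u} (G : GenCat C) :
    (∀ f g : C, G.src g = G.tgt f → G.le (G.src g) (G.tgt f)) ∧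
    (∀ f g : C, G.src g = G.tgt f →
      G.src (G.comp g f) = G.src f ∧ G.tgt (G.comp g f) = G.tgt g) ∧
    (∀ f g h : C, G.src g = G.tgt f → G.src h = G.tgt g →
      G.comp (G.comp h g) f = G.comp h (G.comp g f)) ∧
    (∀ f : C, G.src (G.one f) = f ∧ G.tgt (G.one f) = f) ∧
    (∀ f g : C, G.src g = f → G.comp g (G.one f) = g) ∧
    (∀ f g : C, G.tgt g = f → G.comp (G.one f) g = g) := by
  refine ⟨?_, ?_, ?_, ?_, ?_, ?_⟩
  · intro f g h; rw [h]; exact G.le_refl _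
  · intro f g h
    exact ⟨G.src_comp g f (h ▸ G.le_refl _), G.tgt_comp g f (h ▸ G.le_refl _)⟩
  · intro f g h h1 h2
    apply G.assoc
    left
    refine ⟨h2 ▸ G.le_refl _, ?_⟩
    rw [G.src_comp h g (h2 ▸ G.le_refl _), h1]
    exact G.le_refl _
  · intro f; exact ⟨G.src_one f, G.tgt_one f⟩
  · intro f g h
    apply G.comp_one
    rw [G.tgt_one, h]; exact G.le_refl _
  · intro f g h
    apply G.one_comp
    rw [G.src_one, h]; exact G.le_refl _
end

section
/- In a generalized category, for all elements a and b: a ≅ b if and only if 1_a ∼ 1_b, i.e., a and b are isomorphic exactly when their identities lie in the same iso class. -/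
universe u v w x

/-- `a` is invertible: there is `b` with `a·b = 1_{t a}` and `b·a = 1_{s a}`
(all composites defined). -/
def GenCat.IsInvertible {C : Type u} (G : GenCat C) (a : C) : Prop :=
  ∃ b, G.le (G.src a) (G.tgt b) ∧ G.le (G.src b) (G.tgt a) ∧
    G.comp a b = G.one (G.tgt a) ∧ G.comp b a = G.one (G.src a)

/-- `a` and `b` are in the same iso class: `θ₁·a = b·θ₂` for invertible `θ₁, θ₂`
(both composites defined). -/
def GenCat.IsoRel {C : Type u} (G : GenCat C) (a b : C) : Prop :=
  ∃ θ₁ θ₂, G.IsInvertible θ₁ ∧ G.IsInvertible θ₂ ∧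
    G.le (G.src θ₁) (G.tgt a) ∧ G.le (G.src b) (G.tgt θ₂) ∧
    G.comp θ₁ a = G.comp b θ₂

/-- In a generalized category, `a ≅ b` if and only if `1_a ∼ 1_b`: `a` and `b`
are isomorphic exactly when their identities lie in the same iso class. -/
theorem genCat_iso_iff_one_isoRel {C : Type u} (G : GenCat C) :
    ∀ a b : C,
      (∃ θ, G.IsInvertible θ ∧ G.src θ = a ∧ G.tgt θ = b) ↔
      G.IsoRel (G.one a) (G.one b) := by
  intro a b
  constructor
  · rintro ⟨θ, hinv, hs, ht⟩
    refine ⟨θ, θ, hinv, hinv, ?_, ?_, ?_⟩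
    · rw [G.tgt_one, hs]; exact G.le_refl _
    · rw [G.src_one, ht]; exact G.le_refl _
    · rw [G.comp_one a θ (by rw [G.tgt_one, hs]; exact G.le_refl _),
        G.one_comp b θ (by rw [G.src_one, ht]; exact G.le_refl _)]
  · rintro ⟨θ₁, θ₂, hinv₁, _, h₁, h₂, heq⟩
    rw [G.tgt_one] at h₁
    rw [G.src_one] at h₂
    have e₁ : G.comp θ₁ (G.one a) = θ₁ :=
      G.comp_one a θ₁ (by rw [G.tgt_one]; exact h₁)
    have e₂ : G.comp (G.one b) θ₂ = θ₂ :=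
      G.one_comp b θ₂ (by rw [G.src_one]; exact h₂)
    have hθ : θ₁ = θ₂ := by rw [← e₁, heq, e₂]
    have hsrc : G.src θ₁ = a := by
      rw [← e₁, G.src_comp θ₁ (G.one a) (by rw [G.tgt_one]; exact h₁), G.src_one]
    have htgt : G.tgt θ₁ = b := by
      rw [hθ, ← e₂, G.tgt_comp (G.one b) θ₂ (by rw [G.src_one]; exact h₂), G.tgt_one]
    exact ⟨θ₁, hinv₁, hsrc, htgt⟩
end

section
/- In the category of invertibles 𝒞̃ of a generalized category 𝒞, an iso class ã is an object (i.e., s̃(ã) = t̃(ã) = ã) if and only if a is an invertible element of 𝒞; equivalently, a is invertible if and only if ã equals the iso class of 1_{s(a)} and the iso class of 1_{t(a)}. -/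
universe u v w x

namespace GenCat
variable {C : Type u} (G : GenCat C)

lemma one_invertible (x : C) : G.IsInvertible (G.one x) := by
  have h : G.le (G.src (G.one x)) (G.tgt (G.one x)) := by
    rw [G.src_one, G.tgt_one]; exact G.le_refl x
  refine ⟨G.one x, h, h, ?_, ?_⟩
  · rw [G.one_comp x (G.one x) h, G.tgt_one]
  · rw [G.one_comp x (G.one x) h, G.src_one]

lemma inv_src_tgt {x x' : C}
    (h1 : G.le (G.src x) (G.tgt x')) (h2 : G.le (G.src x') (G.tgt x))
    (h3 : G.comp x x' = G.one (G.tgt x)) (h4 : G.comp x' x = G.one (G.src x)) :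
    G.src x' = G.tgt x ∧ G.tgt x' = G.src x := by
  constructor
  · have := G.src_comp x x' h1
    rw [h3, G.src_one] at this; exact this.symm
  · have := G.tgt_comp x' x h2
    rw [h4, G.tgt_one] at this; exact this.symm

/-- A composite of invertibles with matching source/target is invertible. -/
lemma comp_invertible {x y : C} (hx : G.IsInvertible x) (hy : G.IsInvertible y)
    (hst : G.src x = G.tgt y) : G.IsInvertible (G.comp x y) := by
  obtain ⟨x', hx1, hx2, hx3, hx4⟩ := hx
  obtain ⟨y', hy1, hy2, hy3, hy4⟩ := hy
  obtain ⟨hsx', htx'⟩ := G.inv_src_tgt hx1 hx2 hx3 hx4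
  obtain ⟨hsy', hty'⟩ := G.inv_src_tgt hy1 hy2 hy3 hy4
  have hxy : G.le (G.src x) (G.tgt y) := hst ▸ G.le_refl _
  have hsxy : G.src (G.comp x y) = G.src y := G.src_comp x y hxy
  have htxy : G.tgt (G.comp x y) = G.tgt x := G.tgt_comp x y hxy
  have hy'x' : G.le (G.src y') (G.tgt x') := by
    rw [hsy', htx', hst]; exact G.le_refl _
  have hsy'x' : G.src (G.comp y' x') = G.tgt x := by
    rw [G.src_comp y' x' hy'x', hsx']
  have hty'x' : G.tgt (G.comp y' x') = G.src y := by
    rw [G.tgt_comp y' x' hy'x', hty']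
  refine ⟨G.comp y' x', ?_, ?_, ?_, ?_⟩
  · rw [hsxy, hty'x']; exact G.le_refl _
  · rw [hsy'x', htxy]; exact G.le_refl _
  · -- (x·y)·(y'·x') = 1_{t(x·y)}
    have s1 : G.comp (G.comp x y) (G.comp y' x') = G.comp x (G.comp y (G.comp y' x')) :=
      G.assoc x y (G.comp y' x')
        (Or.inl ⟨hxy, by rw [hsxy, hty'x']; exact G.le_refl _⟩)
    have s2 : G.comp y (G.comp y' x') = G.comp (G.comp y y') x' :=
      (G.assoc y y' x'
        (Or.inr ⟨hy'x', by rw [hty'x']; exact G.le_refl _⟩)).symm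
    have s3 : G.comp (G.comp y y') x' = x' := by
      rw [hy3]
      exact G.one_comp (G.tgt y) x' (by rw [G.src_one, htx', hst]; exact G.le_refl _)
    rw [s1, s2, s3, hx3, htxy]
  · -- (y'·x')·(x·y) = 1_{s(x·y)}
    have s1 : G.comp (G.comp y' x') (G.comp x y) = G.comp y' (G.comp x' (G.comp x y)) :=
      G.assoc y' x' (G.comp x y)
        (Or.inl ⟨hy'x', by rw [hsy'x', htxy]; exact G.le_refl _⟩)
    have s2 : G.comp x' (G.comp x y) = G.comp (G.comp x' x) y :=
      (G.assoc x' x y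
        (Or.inr ⟨hxy, by rw [htxy]; exact hx2⟩)).symm
    have s3 : G.comp (G.comp x' x) y = y := by
      rw [hx4]
      exact G.one_comp (G.src x) y (by rw [G.src_one]; exact hxy)
    rw [s1, s2, s3, hy4, hsxy]

/-- The inverse of an invertible element is invertible. -/
lemma inv_invertible {x x' : C}
    (h1 : G.le (G.src x) (G.tgt x')) (h2 : G.le (G.src x') (G.tgt x))
    (h3 : G.comp x x' = G.one (G.tgt x)) (h4 : G.comp x' x = G.one (G.src x)) :
    G.IsInvertible x' := by
  obtain ⟨hs, ht⟩ := G.inv_src_tgt h1 h2 h3 h4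
  exact ⟨x, h2, h1, by rw [h4, ht], by rw [h3, hs]⟩

end GenCat

/-- In the category of invertibles `𝒞̃`, the iso class `ã` is an object
(`s̃(ã) = t̃(ã) = ã`) if and only if `a` is invertible: `a` is invertible iff
`ã` equals the iso class of `1_{s a}` and the iso class of `1_{t a}`. -/
theorem genCat_invertible_iff_object_class {C : Type u} (G : GenCat C) :
    ∀ a : C, G.IsInvertible a ↔
      (G.IsoRel a (G.one (G.src a)) ∧ G.IsoRel a (G.one (G.tgt a))) := by
  intro a
  constructor
  · rintro ⟨b, h1, h2, h3, h4⟩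
    obtain ⟨hsb, htb⟩ := G.inv_src_tgt h1 h2 h3 h4
    have hbinv : G.IsInvertible b := G.inv_invertible h1 h2 h3 h4
    have hainv : G.IsInvertible a := ⟨b, h1, h2, h3, h4⟩
    constructor
    · -- θ₁ = b, θ₂ = 1_{s a} : b·a = 1_{sa} = 1_{sa}·1_{sa}
      refine ⟨b, G.one (G.src a), hbinv, G.one_invertible _, h2, ?_, ?_⟩
      · rw [G.src_one, G.tgt_one]; exact G.le_refl _
      · rw [h4, G.one_comp (G.src a) (G.one (G.src a))
          (by rw [G.src_one, G.tgt_one]; exact G.le_refl _)]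
    · -- θ₁ = 1_{t a}, θ₂ = a : 1_{ta}·a = 1_{ta}·a
      refine ⟨G.one (G.tgt a), a, G.one_invertible _, hainv, ?_, ?_, rfl⟩
      · rw [G.src_one]; exact G.le_refl _
      · rw [G.src_one]; exact G.le_refl _
  · rintro ⟨⟨θ₁, θ₂, hθ₁, hθ₂, hle₁, hle₂, heq⟩, -⟩
    obtain ⟨φ₁, p1, p2, p3, p4⟩ := hθ₁
    obtain ⟨hsφ, htφ⟩ := G.inv_src_tgt p1 p2 p3 p4
    rw [G.src_one] at hle₂
    -- 1_{sa}·θ₂ = θ₂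
    have h2 : G.comp (G.one (G.src a)) θ₂ = θ₂ :=
      G.one_comp (G.src a) θ₂ (by rw [G.src_one]; exact hle₂)
    have heq' : G.comp θ₁ a = θ₂ := by rw [heq, h2]
    -- a = φ₁·(θ₁·a) = φ₁·θ₂
    have hta : G.tgt (G.comp θ₁ a) = G.tgt θ₁ := G.tgt_comp θ₁ a hle₁
    have hsa : G.src (G.comp θ₁ a) = G.src a := G.src_comp θ₁ a hle₁
    have hassoc : G.comp (G.comp φ₁ θ₁) a = G.comp φ₁ (G.comp θ₁ a) :=
      G.assoc φ₁ θ₁ a (Or.inr ⟨hle₁, by rw [hta, hsφ]; exact G.le_refl _⟩)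
    have hone : G.comp (G.comp φ₁ θ₁) a = a := by
      rw [p4]
      exact G.one_comp (G.src θ₁) a (by rw [G.src_one]; exact hle₁)
    have ha : a = G.comp φ₁ θ₂ := by rw [← heq', ← hassoc, hone]
    have hφinv : G.IsInvertible φ₁ := G.inv_invertible p1 p2 p3 p4
    have hst : G.src φ₁ = G.tgt θ₂ := by rw [hsφ, ← heq', hta]
    rw [ha]
    exact G.comp_invertible hφinv hθ₂ hst
end

section
/- Every functor F : 𝒞 → 𝒟 between generalized categories induces a well-defined map F̃ : 𝒞̃ → 𝒟̃ on categories of invertibles, F̃(ã) := class of F(a); well-defined means independent of the representative a, and F̃ is functorial: F̃(s̃(ã)) = s̃(F̃(ã)), F̃(t̃(ã)) = t̃(F̃(ã)), and F̃(ã·b̃) = F̃(ã)·F̃(b̃) whenever ã·b̃ is defined. -/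
universe u v w x

/-- `c` is an element of the composite iso class `ã·b̃`, i.e.
`c = θ₁·a·θ₂·b·θ₃` for invertible `θ₁, θ₂, θ₃` with all composites defined. -/
def GenCat.CompElt {C : Type u} (G : GenCat C) (a b c : C) : Prop :=
  ∃ θ₁ θ₂ θ₃, G.IsInvertible θ₁ ∧ G.IsInvertible θ₂ ∧ G.IsInvertible θ₃ ∧
    G.le (G.src θ₁) (G.tgt a) ∧ G.le (G.src a) (G.tgt θ₂) ∧
    G.le (G.src θ₂) (G.tgt b) ∧ G.le (G.src b) (G.tgt θ₃) ∧
    c = G.comp (G.comp (G.comp (G.comp θ₁ a) θ₂) b) θ₃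

/-- A (covariant) functor between generalized categories. -/
structure GenFunctor {C : Type u} {D : Type v} (G : GenCat C) (H : GenCat D) where
  toFun : C → D
  map_le : ∀ {a b}, G.le a b → H.le (toFun a) (toFun b)
  map_src : ∀ a, toFun (G.src a) = H.src (toFun a)
  map_tgt : ∀ a, toFun (G.tgt a) = H.tgt (toFun a)
  map_comp : ∀ a b, G.le (G.src a) (G.tgt b) →
      toFun (G.comp a b) = H.comp (toFun a) (toFun b)
  map_one : ∀ a, toFun (G.one a) = H.one (toFun a)

theorem GenCat.one_invertible_s11 {C : Type u} (G : GenCat C) (a : C) :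
    G.IsInvertible (G.one a) := by
  have hle : G.le (G.src (G.one a)) (G.tgt (G.one a)) := by
    rw [G.src_one, G.tgt_one]; exact G.le_refl a
  have hc : G.comp (G.one a) (G.one a) = G.one a := G.one_comp _ _ hle
  refine ⟨G.one a, hle, hle, ?_, ?_⟩ <;> rw [hc] <;> simp [G.src_one, G.tgt_one]

theorem GenCat.isoRel_refl {C : Type u} (G : GenCat C) (a : C) : G.IsoRel a a := by
  refine ⟨G.one (G.tgt a), G.one (G.src a), G.one_invertible_s11 _, G.one_invertible_s11 _, ?_, ?_, ?_⟩
  · simp [G.src_one, G.le_refl]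
  · simp [G.tgt_one, G.le_refl]
  · rw [G.one_comp _ _ (by simp [G.src_one, G.le_refl]),
      G.comp_one _ _ (by simp [G.tgt_one, G.le_refl])]

theorem GenFunctor.map_inv {C : Type u} {D : Type v} {G : GenCat C} {H : GenCat D}
    (F : GenFunctor G H) {a : C} (h : G.IsInvertible a) : H.IsInvertible (F.toFun a) := by
  obtain ⟨b, h1, h2, h3, h4⟩ := h
  refine ⟨F.toFun b, ?_, ?_, ?_, ?_⟩
  · have := F.map_le h1; rwa [F.map_src, F.map_tgt] at this
  · have := F.map_le h2; rwa [F.map_src, F.map_tgt] at this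
  · rw [← F.map_comp _ _ h1, h3, F.map_one, F.map_tgt]
  · rw [← F.map_comp _ _ h2, h4, F.map_one, F.map_src]

/-- Every functor `F : 𝒞 → 𝒟` induces a well-defined map `F̃` on categories of
invertibles, `F̃(ã) := class of F(a)`: it is independent of representatives and
functorial, commuting with `s̃`, `t̃` and with the composition of classes. -/
theorem genCat_functor_on_invertibles {C : Type u} {D : Type v}
    {G : GenCat C} {H : GenCat D} (F : GenFunctor G H) :
    -- well-definedness
    (∀ a b, G.IsoRel a b → H.IsoRel (F.toFun a) (F.toFun b)) ∧
    -- F̃(s̃(ã)) = s̃(F̃(ã))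
    (∀ a, H.IsoRel (F.toFun (G.one (G.src a))) (H.one (H.src (F.toFun a)))) ∧
    -- F̃(t̃(ã)) = t̃(F̃(ã))
    (∀ a, H.IsoRel (F.toFun (G.one (G.tgt a))) (H.one (H.tgt (F.toFun a)))) ∧
    -- F̃(ã·b̃) = F̃(ã)·F̃(b̃) whenever ã·b̃ is defined
    (∀ a b c, G.CompElt a b c →
      ∃ d, H.CompElt (F.toFun a) (F.toFun b) d ∧ H.IsoRel (F.toFun c) d) := by
  refine ⟨?_, ?_, ?_, ?_⟩
  · rintro a b ⟨θ₁, θ₂, hi1, hi2, hl1, hl2, heq⟩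
    refine ⟨F.toFun θ₁, F.toFun θ₂, F.map_inv hi1, F.map_inv hi2, ?_, ?_, ?_⟩
    · have := F.map_le hl1; rwa [F.map_src, F.map_tgt] at this
    · have := F.map_le hl2; rwa [F.map_src, F.map_tgt] at this
    · rw [← F.map_comp _ _ hl1, ← F.map_comp _ _ hl2, heq]
  · intro a
    rw [F.map_one, F.map_src]
    exact H.isoRel_refl _
  · intro a
    rw [F.map_one, F.map_tgt]
    exact H.isoRel_refl _
  · rintro a b c ⟨θ₁, θ₂, θ₃, hi1, hi2, hi3, hl1, hl2, hl3, hl4, heq⟩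
    refine ⟨F.toFun c, ⟨F.toFun θ₁, F.toFun θ₂, F.toFun θ₃,
      F.map_inv hi1, F.map_inv hi2, F.map_inv hi3, ?_, ?_, ?_, ?_, ?_⟩,
      H.isoRel_refl _⟩
    · have := F.map_le hl1; rwa [F.map_src, F.map_tgt] at this
    · have := F.map_le hl2; rwa [F.map_src, F.map_tgt] at this
    · have := F.map_le hl3; rwa [F.map_src, F.map_tgt] at this
    · have := F.map_le hl4; rwa [F.map_src, F.map_tgt] at this
    · have d1 : G.le (G.src (G.comp θ₁ a)) (G.tgt θ₂) := by
        rwa [G.src_comp _ _ hl1]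
      have d2 : G.le (G.src (G.comp (G.comp θ₁ a) θ₂)) (G.tgt b) := by
        rwa [G.src_comp _ _ d1]
      have d3 : G.le (G.src (G.comp (G.comp (G.comp θ₁ a) θ₂) b)) (G.tgt θ₃) := by
        rwa [G.src_comp _ _ d2]
      rw [heq, F.map_comp _ _ d3, F.map_comp _ _ d2, F.map_comp _ _ d1,
        F.map_comp _ _ hl1]
end

section
/- For generalized categories 𝒞, 𝒟, 𝒠 and natural transformations α : F ⇒ G between functors F, G : 𝒞 → 𝒟 and β : F' ⇒ G' between functors F', G' : 𝒟 → 𝒠, the horizontal composite β ⋆ α, defined by (β ⋆ α)(a) := β(G(a))·F'(α(a)), satisfies (β ⋆ α)(a) = G'(α(a))·β(F(a)) for all a, is a natural transformation F'∘F ⇒ G'∘G, and horizontal composition is associative: (γ ⋆ β) ⋆ α = γ ⋆ (β ⋆ α) whenever both sides are defined. -/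
universe u v w x

/-- The identity functor. -/
def GenFunctor.id {C : Type u} (G : GenCat C) : GenFunctor G G where
  toFun := fun a => a
  map_le := fun h => h
  map_src := fun _ => rfl
  map_tgt := fun _ => rfl
  map_comp := fun _ _ _ => rfl
  map_one := fun _ => rfl

/-- Composition of functors between generalized categories. -/
def GenFunctor.comp {C : Type u} {D : Type v} {E : Type w}
    {GC : GenCat C} {GD : GenCat D} {GE : GenCat E}
    (F' : GenFunctor GD GE) (F : GenFunctor GC GD) : GenFunctor GC GE where
  toFun := fun a => F'.toFun (F.toFun a)
  map_le := fun h => F'.map_le (F.map_le h)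
  map_src := fun a => by
    show F'.toFun (F.toFun (GC.src a)) = GE.src (F'.toFun (F.toFun a))
    rw [F.map_src, F'.map_src]
  map_tgt := fun a => by
    show F'.toFun (F.toFun (GC.tgt a)) = GE.tgt (F'.toFun (F.toFun a))
    rw [F.map_tgt, F'.map_tgt]
  map_comp := fun a b h => by
    have hd : GD.le (GD.src (F.toFun a)) (GD.tgt (F.toFun b)) := by
      have h2 := F.map_le h
      rwa [F.map_src, F.map_tgt] at h2
    show F'.toFun (F.toFun (GC.comp a b)) =
      GE.comp (F'.toFun (F.toFun a)) (F'.toFun (F.toFun b))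
    rw [F.map_comp a b h, F'.map_comp _ _ hd]
  map_one := fun a => by
    show F'.toFun (F.toFun (GC.one a)) = GE.one (F'.toFun (F.toFun a))
    rw [F.map_one, F'.map_one]

/-- A natural transformation `θ : F ⇒ K` between functors of generalized
categories: for every `f`, the composites `θ(t f)·F(f)` and `K(f)·θ(s f)` are
defined and equal. -/
def IsNat {C : Type u} {D : Type v} {GC : GenCat C} {GD : GenCat D}
    (F K : GenFunctor GC GD) (θ : C → D) : Prop :=
  ∀ f, GD.le (GD.src (θ (GC.tgt f))) (GD.tgt (F.toFun f)) ∧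
    GD.le (GD.src (K.toFun f)) (GD.tgt (θ (GC.src f))) ∧
    GD.comp (θ (GC.tgt f)) (F.toFun f) = GD.comp (K.toFun f) (θ (GC.src f))

lemma GenCat.le_of_eq' {X : Type*} (GX : GenCat X) {a b : X} (h : a = b) :
    GX.le a b := h ▸ GX.le_refl a

/-- For a natural transformation `θ : F ⇒ K`, the component `θ a` has source
`F a` and target `K a`. -/
lemma IsNat.src_tgt {C : Type u} {D : Type v} {GC : GenCat C} {GD : GenCat D}
    {F K : GenFunctor GC GD} {θ : C → D} (h : IsNat F K θ) (a : C) :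
    GD.src (θ a) = F.toFun a ∧ GD.tgt (θ a) = K.toFun a := by
  obtain ⟨h1, h2, h3⟩ := h (GC.one a)
  simp only [GC.tgt_one, GC.src_one, F.map_one, K.map_one, GD.tgt_one, GD.src_one]
    at h1 h2 h3
  have hd1 : GD.le (GD.src (θ a)) (GD.tgt (GD.one (F.toFun a))) := by
    rw [GD.tgt_one]; exact h1
  have hd2 : GD.le (GD.src (GD.one (K.toFun a))) (GD.tgt (θ a)) := by
    rw [GD.src_one]; exact h2
  have e1 : GD.comp (θ a) (GD.one (F.toFun a)) = θ a := GD.comp_one _ _ hd1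
  have e2 : GD.comp (GD.one (K.toFun a)) (θ a) = θ a := by rw [← h3]; exact e1
  constructor
  · calc GD.src (θ a) = GD.src (GD.comp (θ a) (GD.one (F.toFun a))) := by rw [e1]
      _ = GD.src (GD.one (F.toFun a)) := GD.src_comp _ _ hd1
      _ = F.toFun a := GD.src_one _
  · calc GD.tgt (θ a) = GD.tgt (GD.comp (GD.one (K.toFun a)) (θ a)) := by rw [e2]
      _ = GD.tgt (GD.one (K.toFun a)) := GD.tgt_comp _ _ hd2
      _ = K.toFun a := GD.tgt_one _

/-- Horizontal composition of natural transformations between generalized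
categories.  For `α : F ⇒ K` (functors `𝒞 → 𝒟`) and `β : F' ⇒ K'`
(functors `𝒟 → 𝒠`), the horizontal composite
`(β ⋆ α)(a) := β(K(a))·F'(α(a))` also satisfies
`(β ⋆ α)(a) = K'(α(a))·β(F(a))` (both composites defined), is a natural
transformation `F'∘F ⇒ K'∘K`, and `⋆` is associative. -/
theorem genCat_horizontal_composition {C : Type u} {D : Type v} {E : Type w}
    {GC : GenCat C} {GD : GenCat D} {GE : GenCat E}
    (F K : GenFunctor GC GD) (F' K' : GenFunctor GD GE)
    (α : C → D) (β : D → E) (hα : IsNat F K α) (hβ : IsNat F' K' β) :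
    -- the two formulas for β ⋆ α agree (both composites defined)
    (∀ a, GE.le (GE.src (β (K.toFun a))) (GE.tgt (F'.toFun (α a))) ∧
      GE.le (GE.src (K'.toFun (α a))) (GE.tgt (β (F.toFun a))) ∧
      GE.comp (β (K.toFun a)) (F'.toFun (α a)) =
        GE.comp (K'.toFun (α a)) (β (F.toFun a))) ∧
    -- β ⋆ α is a natural transformation F'∘F ⇒ K'∘K
    IsNat (F'.comp F) (K'.comp K)
      (fun a => GE.comp (β (K.toFun a)) (F'.toFun (α a))) ∧
    -- associativity: (γ ⋆ β) ⋆ α = γ ⋆ (β ⋆ α)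
    (∀ {E₂ : Type x} (GE₂ : GenCat E₂) (F'' K'' : GenFunctor GE GE₂)
      (γ : E → E₂), IsNat F'' K'' γ →
      ∀ a, GE₂.comp
          (GE₂.comp (γ (K'.toFun (K.toFun a))) (F''.toFun (β (K.toFun a))))
          (F''.toFun (F'.toFun (α a))) =
        GE₂.comp (γ (K'.toFun (K.toFun a)))
          (F''.toFun (GE.comp (β (K.toFun a)) (F'.toFun (α a))))) := by
  have srcα : ∀ a, GD.src (α a) = F.toFun a := fun a => (hα.src_tgt a).1
  have tgtα : ∀ a, GD.tgt (α a) = K.toFun a := fun a => (hα.src_tgt a).2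
  have srcβ : ∀ a, GE.src (β a) = F'.toFun a := fun a => (hβ.src_tgt a).1
  have tgtβ : ∀ a, GE.tgt (β a) = K'.toFun a := fun a => (hβ.src_tgt a).2
  -- target/source of F'(α a)
  have tgtx : ∀ a, GE.tgt (F'.toFun (α a)) = F'.toFun (K.toFun a) := fun a => by
    rw [← F'.map_tgt, tgtα]
  have srcx : ∀ a, GE.src (F'.toFun (α a)) = F'.toFun (F.toFun a) := fun a => by
    rw [← F'.map_src, srcα]
  -- part 1
  have part1 : ∀ a, GE.le (GE.src (β (K.toFun a))) (GE.tgt (F'.toFun (α a))) ∧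
      GE.le (GE.src (K'.toFun (α a))) (GE.tgt (β (F.toFun a))) ∧
      GE.comp (β (K.toFun a)) (F'.toFun (α a)) =
        GE.comp (K'.toFun (α a)) (β (F.toFun a)) := fun a => by
    obtain ⟨h1, h2, h3⟩ := hβ (α a)
    rw [tgtα a] at h1 h3
    rw [srcα a] at h2 h3
    exact ⟨h1, h2, h3⟩
  refine ⟨part1, ?_, ?_⟩
  · -- naturality of the horizontal composite
    intro f
    dsimp only [GenFunctor.comp]
    -- definedness of β(K (GC.tgt f)) · F'(α (GC.tgt f))
    have d1 : GE.le (GE.src (β (K.toFun (GC.tgt f)))) (GE.tgt (F'.toFun (α (GC.tgt f)))) :=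
      GE.le_of_eq' ((srcβ _).trans (tgtx (GC.tgt f)).symm)
    have d0 : GE.le (GE.src (β (K.toFun (GC.src f)))) (GE.tgt (F'.toFun (α (GC.src f)))) :=
      GE.le_of_eq' ((srcβ _).trans (tgtx (GC.src f)).symm)
    -- source/target of the composite
    have sc1 : GE.src (GE.comp (β (K.toFun (GC.tgt f))) (F'.toFun (α (GC.tgt f))))
        = F'.toFun (F.toFun (GC.tgt f)) := by rw [GE.src_comp _ _ d1, srcx]
    have tc0 : GE.tgt (GE.comp (β (K.toFun (GC.src f))) (F'.toFun (α (GC.src f))))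
        = K'.toFun (K.toFun (GC.src f)) := by rw [GE.tgt_comp _ _ d0, tgtβ]
    refine ⟨?_, ?_, ?_⟩
    · exact GE.le_of_eq' (by rw [sc1, ← F'.map_tgt, ← F.map_tgt])
    · exact GE.le_of_eq' (by rw [tc0, ← K'.map_src, ← K.map_src])
    · -- the naturality equation
      -- definedness facts in GD
      have dα : GD.le (GD.src (α (GC.tgt f))) (GD.tgt (F.toFun f)) :=
        GD.le_of_eq' (by rw [srcα, ← F.map_tgt])
      have dα' : GD.le (GD.src (K.toFun f)) (GD.tgt (α (GC.src f))) :=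
        GD.le_of_eq' (by rw [tgtα, ← K.map_src])
      -- images under F'
      have dFα : GE.le (GE.src (F'.toFun (α (GC.tgt f)))) (GE.tgt (F'.toFun (F.toFun f))) :=
        GE.le_of_eq' (by rw [srcx, ← F'.map_tgt, ← F.map_tgt])
      have dFα' : GE.le (GE.src (F'.toFun (K.toFun f))) (GE.tgt (F'.toFun (α (GC.src f)))) :=
        GE.le_of_eq' (by rw [← F'.map_src, ← K.map_src, tgtx])
      -- definedness for β and K'
      have dβK : GE.le (GE.src (β (K.toFun (GC.tgt f)))) (GE.tgt (F'.toFun (K.toFun f))) :=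
        GE.le_of_eq' (by rw [srcβ, ← F'.map_tgt, ← K.map_tgt])
      have dK'β : GE.le (GE.src (K'.toFun (K.toFun f))) (GE.tgt (β (K.toFun (GC.src f)))) :=
        GE.le_of_eq' (by rw [← K'.map_src, ← K.map_src, tgtβ])
      calc GE.comp (GE.comp (β (K.toFun (GC.tgt f))) (F'.toFun (α (GC.tgt f)))) (F'.toFun (F.toFun f))
          = GE.comp (β (K.toFun (GC.tgt f))) (GE.comp (F'.toFun (α (GC.tgt f))) (F'.toFun (F.toFun f))) := by
            refine GE.assoc _ _ _ (Or.inl ⟨d1, ?_⟩)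
            rw [GE.src_comp _ _ d1]
            exact dFα
        _ = GE.comp (β (K.toFun (GC.tgt f))) (F'.toFun (GD.comp (α (GC.tgt f)) (F.toFun f))) := by
            rw [F'.map_comp _ _ dα]
        _ = GE.comp (β (K.toFun (GC.tgt f))) (F'.toFun (GD.comp (K.toFun f) (α (GC.src f)))) := by
            rw [(hα f).2.2]
        _ = GE.comp (β (K.toFun (GC.tgt f))) (GE.comp (F'.toFun (K.toFun f)) (F'.toFun (α (GC.src f)))) := by
            rw [F'.map_comp _ _ dα']
        _ = GE.comp (GE.comp (β (K.toFun (GC.tgt f))) (F'.toFun (K.toFun f))) (F'.toFun (α (GC.src f))) := by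
            refine (GE.assoc _ _ _ (Or.inr ⟨dFα', ?_⟩)).symm
            rw [GE.tgt_comp _ _ dFα']
            exact dβK
        _ = GE.comp (GE.comp (K'.toFun (K.toFun f)) (β (K.toFun (GC.src f)))) (F'.toFun (α (GC.src f))) := by
            have := (hβ (K.toFun f)).2.2
            rw [← K.map_tgt, ← K.map_src] at this
            rw [this]
        _ = GE.comp (K'.toFun (K.toFun f)) (GE.comp (β (K.toFun (GC.src f))) (F'.toFun (α (GC.src f)))) := by
            refine GE.assoc _ _ _ (Or.inr ⟨d0, ?_⟩)
            rw [GE.tgt_comp _ _ d0]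
            exact dK'β
  · -- associativity of horizontal composition
    intro E₂ GE₂ F'' K'' γ hγ a
    have d0 : GE.le (GE.src (β (K.toFun a))) (GE.tgt (F'.toFun (α a))) :=
      GE.le_of_eq' ((srcβ _).trans (tgtx a).symm)
    have dβx : GE₂.le (GE₂.src (F''.toFun (β (K.toFun a))))
        (GE₂.tgt (F''.toFun (F'.toFun (α a)))) :=
      GE₂.le_of_eq' (by rw [← F''.map_src, srcβ, ← F''.map_tgt, tgtx])
    have dγβ : GE₂.le (GE₂.src (γ (K'.toFun (K.toFun a))))
        (GE₂.tgt (F''.toFun (β (K.toFun a)))) :=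
      GE₂.le_of_eq' (by rw [(hγ.src_tgt _).1, ← F''.map_tgt, tgtβ])
    calc GE₂.comp (GE₂.comp (γ (K'.toFun (K.toFun a))) (F''.toFun (β (K.toFun a))))
          (F''.toFun (F'.toFun (α a)))
        = GE₂.comp (γ (K'.toFun (K.toFun a)))
            (GE₂.comp (F''.toFun (β (K.toFun a))) (F''.toFun (F'.toFun (α a)))) := by
          refine GE₂.assoc _ _ _ (Or.inl ⟨dγβ, ?_⟩)
          rw [GE₂.src_comp _ _ dγβ]
          exact dβx
      _ = GE₂.comp (γ (K'.toFun (K.toFun a)))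
            (F''.toFun (GE.comp (β (K.toFun a)) (F'.toFun (α a)))) := by
          rw [F''.map_comp _ _ d0]
end

section
/- Interchange law for generalized categories: let α : F ⇒ G and β : G ⇒ H be natural transformations between functors 𝒞 → 𝒟, and α' : F' ⇒ G' and β' : G' ⇒ H' natural transformations between functors 𝒟 → 𝒠. Then (β' ∙ α') ⋆ (β ∙ α) = (β' ⋆ β) ∙ (α' ⋆ α), where vertical composition is (θ' ∙ θ)(a) := θ'(a)·θ(a) and horizontal composition is (β ⋆ α)(a) := β(G(a))·F'(α(a)). Moreover vertical composites of natural transformations are natural, so that generalized categories, functors, and natural transformations form a strict 2-category. -/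
universe u v w x

section Aux

variable {C : Type u} {D : Type v} {GC : GenCat C} {GD : GenCat D}

theorem nat_src {F K : GenFunctor GC GD} {θ : C → D} (h : IsNat F K θ) (a : C) :
    GD.src (θ a) = F.toFun a := by
  have h1 := h (GC.one a)
  rw [GC.src_one, GC.tgt_one] at h1
  obtain ⟨d1, d2, e⟩ := h1
  have he := congrArg GD.src e
  rw [GD.src_comp _ _ d1, GD.src_comp _ _ d2, F.map_one, GD.src_one] at he
  exact he.symm

theorem nat_tgt {F K : GenFunctor GC GD} {θ : C → D} (h : IsNat F K θ) (a : C) :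
    GD.tgt (θ a) = K.toFun a := by
  have h1 := h (GC.one a)
  rw [GC.src_one, GC.tgt_one] at h1
  obtain ⟨d1, d2, e⟩ := h1
  have he := congrArg GD.tgt e
  rw [GD.tgt_comp _ _ d1, GD.tgt_comp _ _ d2, K.map_one, GD.tgt_one] at he
  exact he

theorem vert_nat {F G H : GenFunctor GC GD} {α β : C → D}
    (hα : IsNat F G α) (hβ : IsNat G H β) :
    IsNat F H (fun a => GD.comp (β a) (α a)) := by
  have L : ∀ {x y : D}, x = y → GD.le x y := fun h => h ▸ GD.le_refl _
  have dβα : ∀ a, GD.le (GD.src (β a)) (GD.tgt (α a)) := fun a =>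
    L (by rw [nat_src hβ, nat_tgt hα])
  intro f
  dsimp only
  obtain ⟨d1, d2, eα⟩ := hα f
  obtain ⟨d3, d4, eβ⟩ := hβ f
  refine ⟨?_, ?_, ?_⟩
  · rw [GD.src_comp _ _ (dβα _)]; exact d1
  · rw [GD.tgt_comp _ _ (dβα _)]; exact d4
  · calc GD.comp (GD.comp (β (GC.tgt f)) (α (GC.tgt f))) (F.toFun f)
        = GD.comp (β (GC.tgt f)) (GD.comp (α (GC.tgt f)) (F.toFun f)) :=
          GD.assoc _ _ _ (Or.inl ⟨dβα _, by rw [GD.src_comp _ _ (dβα _)]; exact d1⟩)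
      _ = GD.comp (β (GC.tgt f)) (GD.comp (G.toFun f) (α (GC.src f))) := by rw [eα]
      _ = GD.comp (GD.comp (β (GC.tgt f)) (G.toFun f)) (α (GC.src f)) :=
          (GD.assoc _ _ _ (Or.inr ⟨d2, by rw [GD.tgt_comp _ _ d2]; exact d3⟩)).symm
      _ = GD.comp (GD.comp (H.toFun f) (β (GC.src f))) (α (GC.src f)) := by rw [eβ]
      _ = GD.comp (H.toFun f) (GD.comp (β (GC.src f)) (α (GC.src f))) :=
          GD.assoc _ _ _ (Or.inl ⟨d4, by rw [GD.src_comp _ _ d4]; exact dβα _⟩)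

end Aux

/-- Interchange law for generalized categories: for natural transformations
`α : F ⇒ G`, `β : G ⇒ H` (functors `𝒞 → 𝒟`) and `α' : F' ⇒ G'`,
`β' : G' ⇒ H'` (functors `𝒟 → 𝒠`),
`(β' ∙ α') ⋆ (β ∙ α) = (β' ⋆ β) ∙ (α' ⋆ α)`, where `(θ' ∙ θ)(a) := θ'(a)·θ(a)`
and `(β ⋆ α)(a) := β(G(a))·F'(α(a))`.  Moreover vertical composites of natural
transformations are natural (so that generalized categories, functors and
natural transformations form a strict 2-category). -/
theorem genCat_interchange {C : Type u} {D : Type v} {E : Type w}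
    {GC : GenCat C} {GD : GenCat D} {GE : GenCat E}
    (F G H : GenFunctor GC GD) (F' G' H' : GenFunctor GD GE)
    (α β : C → D) (α' β' : D → E)
    (hα : IsNat F G α) (hβ : IsNat G H β)
    (hα' : IsNat F' G' α') (hβ' : IsNat G' H' β') :
    -- interchange
    (∀ a, GE.comp (GE.comp (β' (H.toFun a)) (α' (H.toFun a)))
        (F'.toFun (GD.comp (β a) (α a))) =
      GE.comp (GE.comp (β' (H.toFun a)) (G'.toFun (β a)))
        (GE.comp (α' (G.toFun a)) (F'.toFun (α a)))) ∧
    -- vertical composites are natural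
    IsNat F H (fun a => GD.comp (β a) (α a)) ∧
    IsNat F' H' (fun d => GE.comp (β' d) (α' d)) := by
  have LD : ∀ {x y : D}, x = y → GD.le x y := fun h => h ▸ GD.le_refl _
  have LE : ∀ {x y : E}, x = y → GE.le x y := fun h => h ▸ GE.le_refl _
  have dβα : ∀ a, GD.le (GD.src (β a)) (GD.tgt (α a)) := fun a =>
    LD (by rw [nat_src hβ, nat_tgt hα])
  refine ⟨?_, vert_nat hα hβ, vert_nat hα' hβ'⟩
  intro a
  -- abbreviations via haves on src/tgt
  have sβ : GD.src (β a) = G.toFun a := nat_src hβ a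
  have tβ : GD.tgt (β a) = H.toFun a := nat_tgt hβ a
  have sα : GD.src (α a) = F.toFun a := nat_src hα a
  have tα : GD.tgt (α a) = G.toFun a := nat_tgt hα a
  have key := (hα' (β a)).2.2
  rw [sβ, tβ] at key
  -- key : GE.comp (α' (H a)) (F' (β a)) = GE.comp (G' (β a)) (α' (G a))
  rw [F'.map_comp _ _ (dβα a)]
  set x := β' (H.toFun a) with hx
  set y := α' (H.toFun a) with hy
  set p := F'.toFun (β a) with hp
  set q := F'.toFun (α a) with hq
  set u := G'.toFun (β a) with hu
  set v := α' (G.toFun a) with hv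
  have sx : GE.src x = G'.toFun (H.toFun a) := nat_src hβ' _
  have ty : GE.tgt y = G'.toFun (H.toFun a) := nat_tgt hα' _
  have sy : GE.src y = F'.toFun (H.toFun a) := nat_src hα' _
  have tp : GE.tgt p = F'.toFun (H.toFun a) := by rw [hp, ← F'.map_tgt, tβ]
  have sp : GE.src p = F'.toFun (G.toFun a) := by rw [hp, ← F'.map_src, sβ]
  have tq : GE.tgt q = F'.toFun (G.toFun a) := by rw [hq, ← F'.map_tgt, tα]
  have su : GE.src u = G'.toFun (G.toFun a) := by rw [hu, ← G'.map_src, sβ]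
  have tu : GE.tgt u = G'.toFun (H.toFun a) := by rw [hu, ← G'.map_tgt, tβ]
  have tv : GE.tgt v = G'.toFun (G.toFun a) := nat_tgt hα' _
  have sv : GE.src v = F'.toFun (G.toFun a) := nat_src hα' _
  have dxy : GE.le (GE.src x) (GE.tgt y) := LE (by rw [sx, ty])
  have dyp : GE.le (GE.src y) (GE.tgt p) := LE (by rw [sy, tp])
  have dpq : GE.le (GE.src p) (GE.tgt q) := LE (by rw [sp, tq])
  have duv : GE.le (GE.src u) (GE.tgt v) := LE (by rw [su, tv])
  have dvq : GE.le (GE.src v) (GE.tgt q) := LE (by rw [sv, tq])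
  have dxu : GE.le (GE.src x) (GE.tgt u) := LE (by rw [sx, tu])
  calc GE.comp (GE.comp x y) (GE.comp p q)
      = GE.comp x (GE.comp y (GE.comp p q)) :=
        GE.assoc _ _ _ (Or.inl ⟨dxy, by
          rw [GE.src_comp _ _ dxy, GE.tgt_comp _ _ dpq]; exact dyp⟩)
    _ = GE.comp x (GE.comp (GE.comp y p) q) := by
        rw [GE.assoc y p q (Or.inl ⟨dyp, by
          rw [GE.src_comp _ _ dyp]; exact dpq⟩)]
    _ = GE.comp x (GE.comp (GE.comp u v) q) := by rw [key]
    _ = GE.comp x (GE.comp u (GE.comp v q)) := by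
        rw [GE.assoc u v q (Or.inl ⟨duv, by
          rw [GE.src_comp _ _ duv]; exact dvq⟩)]
    _ = GE.comp (GE.comp x u) (GE.comp v q) :=
        (GE.assoc _ _ _ (Or.inr ⟨by rw [GE.tgt_comp _ _ dvq]; exact LE (by rw [su, tv]), by
          rw [GE.tgt_comp _ _ (by rw [GE.tgt_comp _ _ dvq]; exact duv : GE.le (GE.src u) (GE.tgt (GE.comp v q)))]; exact dxu⟩)).symm
end

section
/- Adjoint hom-set bijection for generalized categories: for functors F : 𝒞 → 𝒟 and G : 𝒟 → 𝒞 between generalized categories, the following are equivalent. (1) There exist natural transformations η : id_𝒞 ⇒ G∘F and ε : F∘G ⇒ id_𝒟 such that (F, G, η, ε) is an adjunction (i.e., the triangle identities hold). (2) For every f ∈ 𝒞 and g ∈ 𝒟 there is a bijection φ_{f,g} : hom(F(f), g) ≅ hom(f, G(g)), natural in f and g, meaning: if u·F(v) : F(f) → g is defined then φ(u·F(v)) = φ(u)·v, and if v'·v : F(f) → g is defined then φ(v'·v) = G(v')·φ(v). -/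
universe u v w x

namespace GenCatAux

lemma id_toFun {C : Type u} (G : GenCat C) (a : C) : (GenFunctor.id G).toFun a = a := rfl

lemma comp_toFun {C : Type u} {D : Type v} {E : Type w}
    {GC : GenCat C} {GD : GenCat D} {GE : GenCat E}
    (F' : GenFunctor GD GE) (F : GenFunctor GC GD) (a : C) :
    (F'.comp F).toFun a = F'.toFun (F.toFun a) := rfl

lemma le_of_eq {C : Type u} (G : GenCat C) {a b : C} (h : a = b) : G.le a b :=
  h ▸ G.le_refl a

lemma assoc3 {C : Type u} (G : GenCat C) {a b c : C}
    (h1 : G.le (G.src a) (G.tgt b)) (h2 : G.le (G.src b) (G.tgt c)) :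
    G.comp (G.comp a b) c = G.comp a (G.comp b c) :=
  G.assoc a b c (Or.inl ⟨h1, by rwa [G.src_comp a b h1]⟩)

lemma eta_spec {C : Type u} {D : Type v} {GC : GenCat C} {GD : GenCat D}
    (F : GenFunctor GC GD) (K : GenFunctor GD GC) (η : C → C)
    (h : IsNat (GenFunctor.id GC) (K.comp F) η) (a : C) :
    GC.src (η a) = a ∧ GC.tgt (η a) = K.toFun (F.toFun a) := by
  obtain ⟨h1, h2, h3⟩ := h (GC.one a)
  simp only [id_toFun, comp_toFun, GC.tgt_one, GC.src_one, F.map_one, K.map_one] at h1 h2 h3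
  -- h1 : GC.le (GC.src (η a)) a
  -- h2 : GC.le (GC.src (GC.one (K.toFun (F.toFun a)))) (GC.tgt (η a))
  -- h3 : GC.comp (η a) (GC.one a) = GC.comp (GC.one (K.toFun (F.toFun a))) (η a)
  have d1 : GC.le (GC.src (η a)) (GC.tgt (GC.one a)) := by rw [GC.tgt_one]; exact h1
  have d2 : GC.le (GC.src (GC.one (K.toFun (F.toFun a)))) (GC.tgt (η a)) := by
    rw [GC.src_one]; exact h2
  constructor
  · have e1 := GC.src_comp (η a) (GC.one a) d1
    have e2 := GC.src_comp (GC.one (K.toFun (F.toFun a))) (η a) d2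
    rw [h3, e2] at e1
    rw [GC.src_one] at e1
    exact e1
  · have t1 := GC.tgt_comp (η a) (GC.one a) d1
    have t2 := GC.tgt_comp (GC.one (K.toFun (F.toFun a))) (η a) d2
    rw [h3, t2] at t1
    rw [GC.tgt_one] at t1
    exact t1.symm

lemma eps_spec {C : Type u} {D : Type v} {GC : GenCat C} {GD : GenCat D}
    (F : GenFunctor GC GD) (K : GenFunctor GD GC) (ε : D → D)
    (h : IsNat (F.comp K) (GenFunctor.id GD) ε) (g : D) :
    GD.src (ε g) = F.toFun (K.toFun g) ∧ GD.tgt (ε g) = g := by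
  obtain ⟨h1, h2, h3⟩ := h (GD.one g)
  simp only [id_toFun, comp_toFun, GD.tgt_one, GD.src_one, K.map_one, F.map_one] at h1 h2 h3
  -- h1 : GD.le (GD.src (ε g)) (GD.tgt (GD.one (F.toFun (K.toFun g))))  (tgt_one applied?)
  -- h3 : GD.comp (ε g) (GD.one (F.toFun (K.toFun g))) = GD.comp (GD.one g) (ε g)
  have d1 : GD.le (GD.src (ε g)) (GD.tgt (GD.one (F.toFun (K.toFun g)))) := by
    rw [GD.tgt_one]; exact h1
  have d2 : GD.le (GD.src (GD.one g)) (GD.tgt (ε g)) := by rw [GD.src_one]; exact h2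
  constructor
  · have e1 := GD.src_comp (ε g) (GD.one (F.toFun (K.toFun g))) d1
    have e2 := GD.src_comp (GD.one g) (ε g) d2
    rw [h3, e2] at e1
    rw [GD.src_one] at e1
    exact e1
  · have t1 := GD.tgt_comp (ε g) (GD.one (F.toFun (K.toFun g))) d1
    have t2 := GD.tgt_comp (GD.one g) (ε g) d2
    rw [h3, t2] at t1
    rw [GD.tgt_one] at t1
    exact t1.symm

end GenCatAux
/-- Adjoint hom-set bijection for generalized categories.  For functors
`F : 𝒞 → 𝒟` and `K : 𝒟 → 𝒞` the following are equivalent: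
(1) there are natural transformations `η : id_𝒞 ⇒ K∘F`, `ε : F∘K ⇒ id_𝒟`
satisfying the triangle identities; (2) there is a family of bijections
`φ_{f,g} : hom(F f, g) ≅ hom(f, K g)` (here encoded by a map
`Φ : C → D → D → C` that, for `u ∈ hom(F f, g)`, gives `Φ f g u ∈ hom(f, K g)`,
injectively and surjectively), natural in `f` and `g`:
`φ(u·F(v)) = φ(u)·v` and `φ(v'·v) = K(v')·φ(v)` whenever the relevant
composites are defined. -/
theorem genCat_adjunction_hom_bijection {C : Type u} {D : Type v}
    {GC : GenCat C} {GD : GenCat D}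
    (F : GenFunctor GC GD) (K : GenFunctor GD GC) :
    (∃ (η : C → C) (ε : D → D),
      IsNat (GenFunctor.id GC) (K.comp F) η ∧
      IsNat (F.comp K) (GenFunctor.id GD) ε ∧
      (∀ g : D, GC.le (GC.src (K.toFun (ε g))) (GC.tgt (η (K.toFun g))) ∧
        GC.comp (K.toFun (ε g)) (η (K.toFun g)) = GC.one (K.toFun g)) ∧
      (∀ f : C, GD.le (GD.src (ε (F.toFun f))) (GD.tgt (F.toFun (η f))) ∧
        GD.comp (ε (F.toFun f)) (F.toFun (η f)) = GD.one (F.toFun f))) ↔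
    (∃ Φ : C → D → D → C,
      -- Φ f g maps hom(F f, g) into hom(f, K g)
      (∀ f g u, GD.src u = F.toFun f → GD.tgt u = g →
        GC.src (Φ f g u) = f ∧ GC.tgt (Φ f g u) = K.toFun g) ∧
      -- injectivity
      (∀ f g u u', GD.src u = F.toFun f → GD.tgt u = g →
        GD.src u' = F.toFun f → GD.tgt u' = g →
        Φ f g u = Φ f g u' → u = u') ∧
      -- surjectivity
      (∀ f g w, GC.src w = f → GC.tgt w = K.toFun g →
        ∃ u, GD.src u = F.toFun f ∧ GD.tgt u = g ∧ Φ f g u = w) ∧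
      -- naturality in f: φ(u·F(v)) = φ(u)·v
      (∀ f f' g v u, GC.src v = f → GC.tgt v = f' →
        GD.src u = F.toFun f' → GD.tgt u = g →
        GD.le (GD.src u) (GD.tgt (F.toFun v)) →
        Φ f g (GD.comp u (F.toFun v)) = GC.comp (Φ f' g u) v) ∧
      -- naturality in g: φ(v'·v) = K(v')·φ(v)
      (∀ f g g' v v', GD.src v = F.toFun f → GD.tgt v = g →
        GD.src v' = g → GD.tgt v' = g' →
        GD.le (GD.src v') (GD.tgt v) →
        Φ f g' (GD.comp v' v) = GC.comp (K.toFun v') (Φ f g v))) := by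
  constructor
  · rintro ⟨η, ε, hη, hε, htri1, htri2⟩
    have ηs : ∀ a, GC.src (η a) = a := fun a => (GenCatAux.eta_spec F K η hη a).1
    have ηt : ∀ a, GC.tgt (η a) = K.toFun (F.toFun a) :=
      fun a => (GenCatAux.eta_spec F K η hη a).2
    have εs : ∀ g, GD.src (ε g) = F.toFun (K.toFun g) :=
      fun g => (GenCatAux.eps_spec F K ε hε g).1
    have εt : ∀ g, GD.tgt (ε g) = g := fun g => (GenCatAux.eps_spec F K ε hε g).2
    -- definedness of K u · η f for u ∈ hom(F f, g)
    have d1 : ∀ (f : C) (u : D), GD.src u = F.toFun f →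
        GC.le (GC.src (K.toFun u)) (GC.tgt (η f)) := by
      intro f u hu
      exact GenCatAux.le_of_eq GC (by rw [← K.map_src, hu, ηt])
    -- the inverse map cancels
    have cancel : ∀ (f : C) (g : D) (u : D), GD.src u = F.toFun f → GD.tgt u = g →
        GD.comp (ε g) (F.toFun (GC.comp (K.toFun u) (η f))) = u := by
      intro f g u hus hut
      rw [F.map_comp _ _ (d1 f u hus)]
      rw [← GenCatAux.assoc3 GD
        (GenCatAux.le_of_eq GD (by rw [εs, ← F.map_tgt, ← K.map_tgt, hut]))
        (GenCatAux.le_of_eq GD (by rw [← F.map_src, ← K.map_src, hus, ← F.map_tgt, ηt]))]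
      obtain ⟨n1, n2, n3⟩ := hε u
      simp only [GenCatAux.comp_toFun, GenCatAux.id_toFun] at n3
      rw [hut, hus] at n3
      rw [n3]
      rw [GenCatAux.assoc3 GD
        (GenCatAux.le_of_eq GD (by rw [hus, εt]))
        (GenCatAux.le_of_eq GD (by rw [εs, ← F.map_tgt, ηt]))]
      rw [(htri2 f).2]
      exact GD.comp_one _ _ (GenCatAux.le_of_eq GD (by rw [hus, GD.tgt_one]))
    refine ⟨fun f g u => GC.comp (K.toFun u) (η f), ?_, ?_, ?_, ?_, ?_⟩
    · -- hom property
      intro f g u hus hut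
      constructor
      · rw [GC.src_comp _ _ (d1 f u hus), ηs]
      · rw [GC.tgt_comp _ _ (d1 f u hus), ← K.map_tgt, hut]
    · -- injectivity
      intro f g u u' hus hut hus' hut' heq
      simp only [] at heq
      rw [← cancel f g u hus hut, heq, cancel f g u' hus' hut']
    · -- surjectivity
      intro f g w hws hwt
      have dd : GD.le (GD.src (ε g)) (GD.tgt (F.toFun w)) :=
        GenCatAux.le_of_eq GD (by rw [εs, ← F.map_tgt, hwt])
      refine ⟨GD.comp (ε g) (F.toFun w), ?_, ?_, ?_⟩
      · rw [GD.src_comp _ _ dd, ← F.map_src, hws]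
      · rw [GD.tgt_comp _ _ dd, εt]
      · simp only []
        rw [K.map_comp _ _ dd]
        rw [GenCatAux.assoc3 GC
          (GenCatAux.le_of_eq GC (by rw [← K.map_src, εs, ← K.map_tgt, ← F.map_tgt, hwt]))
          (GenCatAux.le_of_eq GC (by rw [← K.map_src, ← F.map_src, hws, ηt]))]
        obtain ⟨m1, m2, m3⟩ := hη w
        simp only [GenCatAux.comp_toFun, GenCatAux.id_toFun] at m3
        rw [hws, hwt] at m3
        rw [← m3]
        rw [← GenCatAux.assoc3 GC
          (GenCatAux.le_of_eq GC (by rw [← K.map_src, εs, ηt]))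
          (GenCatAux.le_of_eq GC (by rw [ηs, hwt]))]
        rw [(htri1 g).2]
        exact GC.one_comp _ _ (GenCatAux.le_of_eq GC (by rw [GC.src_one, hwt]))
    · -- naturality in f
      intro f f' g v u hvs hvt hus hut hle
      simp only []
      rw [K.map_comp _ _ hle]
      rw [GenCatAux.assoc3 GC
        (GenCatAux.le_of_eq GC (by rw [← K.map_src, hus, ← K.map_tgt, ← F.map_tgt, hvt]))
        (GenCatAux.le_of_eq GC (by rw [← K.map_src, ← F.map_src, hvs, ηt]))]
      obtain ⟨m1, m2, m3⟩ := hη v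
      simp only [GenCatAux.comp_toFun, GenCatAux.id_toFun] at m3
      rw [hvs, hvt] at m3
      rw [← m3]
      rw [← GenCatAux.assoc3 GC
        (GenCatAux.le_of_eq GC (by rw [← K.map_src, hus, ηt]))
        (GenCatAux.le_of_eq GC (by rw [ηs, hvt]))]
    · -- naturality in g
      intro f g g' v v' hvs hvt hvs' hvt' hle
      simp only []
      rw [K.map_comp _ _ hle]
      exact GenCatAux.assoc3 GC
        (GenCatAux.le_of_eq GC (by rw [← K.map_src, hvs', ← K.map_tgt, hvt]))
        (GenCatAux.le_of_eq GC (by rw [← K.map_src, hvs, ηt]))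
  · rintro ⟨Φ, hhom, hinj, hsurj, hnatf, hnatg⟩
    set η : C → C := fun f => Φ f (F.toFun f) (GD.one (F.toFun f)) with hηdef
    have ηspec : ∀ f, GC.src (η f) = f ∧ GC.tgt (η f) = K.toFun (F.toFun f) :=
      fun f => hhom f (F.toFun f) (GD.one (F.toFun f)) (GD.src_one _) (GD.tgt_one _)
    have ηs : ∀ f, GC.src (η f) = f := fun f => (ηspec f).1
    have ηt : ∀ f, GC.tgt (η f) = K.toFun (F.toFun f) := fun f => (ηspec f).2
    choose ε εsrc εtgt εΦ using fun g =>
      hsurj (K.toFun g) g (GC.one (K.toFun g)) (GC.src_one _) (GC.tgt_one _)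
    -- Φ of F v equals η(tgt v) · v and also K(F v) · η(src v)
    have hA : ∀ v : C, Φ (GC.src v) (F.toFun (GC.tgt v)) (F.toFun v)
        = GC.comp (η (GC.tgt v)) v := by
      intro v
      have h := hnatf (GC.src v) (GC.tgt v) (F.toFun (GC.tgt v)) v
        (GD.one (F.toFun (GC.tgt v))) rfl rfl (GD.src_one _) (GD.tgt_one _)
        (GenCatAux.le_of_eq GD (by rw [GD.src_one, ← F.map_tgt]))
      rwa [GD.one_comp _ _
        (GenCatAux.le_of_eq GD (by rw [GD.src_one, ← F.map_tgt]))] at h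
    have hB : ∀ v : C, Φ (GC.src v) (F.toFun (GC.tgt v)) (F.toFun v)
        = GC.comp (K.toFun (F.toFun v)) (η (GC.src v)) := by
      intro v
      have h := hnatg (GC.src v) (F.toFun (GC.src v)) (F.toFun (GC.tgt v))
        (GD.one (F.toFun (GC.src v))) (F.toFun v) (GD.src_one _) (GD.tgt_one _)
        (by rw [← F.map_src]) (by rw [← F.map_tgt])
        (GenCatAux.le_of_eq GD (by rw [← F.map_src, GD.tgt_one]))
      rwa [GD.comp_one _ _
        (GenCatAux.le_of_eq GD (by rw [← F.map_src, GD.tgt_one]))] at h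
    refine ⟨η, ε, ?_, ?_, ?_, ?_⟩
    · -- η is natural
      intro f
      refine ⟨GenCatAux.le_of_eq GC (by rw [ηs, GenCatAux.id_toFun]), ?_, ?_⟩
      · exact GenCatAux.le_of_eq GC
          (by rw [GenCatAux.comp_toFun, ← K.map_src, ← F.map_src, ηt])
      · exact (hA f).symm.trans (hB f)
    · -- ε is natural
      intro g
      refine ⟨?_, ?_, ?_⟩
      · exact GenCatAux.le_of_eq GD
          (by rw [εsrc, GenCatAux.comp_toFun, ← F.map_tgt, ← K.map_tgt])
      · exact GenCatAux.le_of_eq GD (by rw [GenCatAux.id_toFun, εtgt])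
      · -- comp (ε (tgt g)) (F K g) = comp g (ε (src g))
        simp only [GenCatAux.comp_toFun, GenCatAux.id_toFun]
        have dL : GD.le (GD.src (ε (GD.tgt g))) (GD.tgt (F.toFun (K.toFun g))) :=
          GenCatAux.le_of_eq GD (by rw [εsrc, ← F.map_tgt, ← K.map_tgt])
        have dR : GD.le (GD.src g) (GD.tgt (ε (GD.src g))) :=
          GenCatAux.le_of_eq GD (by rw [εtgt])
        have ΦL : Φ (K.toFun (GD.src g)) (GD.tgt g)
            (GD.comp (ε (GD.tgt g)) (F.toFun (K.toFun g))) = K.toFun g := by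
          have h := hnatf (K.toFun (GD.src g)) (K.toFun (GD.tgt g)) (GD.tgt g)
            (K.toFun g) (ε (GD.tgt g)) (by rw [← K.map_src]) (by rw [← K.map_tgt])
            (εsrc _) (εtgt _)
            (GenCatAux.le_of_eq GD (by rw [εsrc, ← F.map_tgt, ← K.map_tgt]))
          rw [εΦ] at h
          rw [h]
          exact GC.one_comp _ _
            (GenCatAux.le_of_eq GC (by rw [GC.src_one, ← K.map_tgt]))
        have ΦR : Φ (K.toFun (GD.src g)) (GD.tgt g)
            (GD.comp g (ε (GD.src g))) = K.toFun g := by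
          have h := hnatg (K.toFun (GD.src g)) (GD.src g) (GD.tgt g)
            (ε (GD.src g)) g (εsrc _) (εtgt _) rfl rfl dR
          rw [εΦ] at h
          rw [h]
          exact GC.comp_one _ _
            (GenCatAux.le_of_eq GC (by rw [← K.map_src, GC.tgt_one]))
        refine hinj (K.toFun (GD.src g)) (GD.tgt g) _ _ ?_ ?_ ?_ ?_ (ΦL.trans ΦR.symm)
        · rw [GD.src_comp _ _ dL, ← F.map_src, ← K.map_src]
        · rw [GD.tgt_comp _ _ dL, εtgt]
        · rw [GD.src_comp _ _ dR, εsrc]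
        · rw [GD.tgt_comp _ _ dR]
    · -- triangle 1
      intro g
      constructor
      · exact GenCatAux.le_of_eq GC (by rw [← K.map_src, εsrc, ηt])
      · have h := hnatg (K.toFun g) (F.toFun (K.toFun g)) g
          (GD.one (F.toFun (K.toFun g))) (ε g) (GD.src_one _) (GD.tgt_one _)
          (εsrc g) (εtgt g)
          (GenCatAux.le_of_eq GD (by rw [εsrc, GD.tgt_one]))
        rw [GD.comp_one _ _
          (GenCatAux.le_of_eq GD (by rw [εsrc, GD.tgt_one]))] at h
        rw [εΦ] at h
        exact h.symm
    · -- triangle 2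
      intro f
      have dL : GD.le (GD.src (ε (F.toFun f))) (GD.tgt (F.toFun (η f))) :=
        GenCatAux.le_of_eq GD (by rw [εsrc, ← F.map_tgt, ηt])
      refine ⟨dL, ?_⟩
      have ΦL : Φ f (F.toFun f) (GD.comp (ε (F.toFun f)) (F.toFun (η f))) = η f := by
        have h := hnatf f (K.toFun (F.toFun f)) (F.toFun f) (η f) (ε (F.toFun f))
          (ηs f) (ηt f) (εsrc _) (εtgt _) dL
        rw [εΦ] at h
        rw [h]
        exact GC.one_comp _ _
          (GenCatAux.le_of_eq GC (by rw [GC.src_one, ηt]))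
      refine hinj f (F.toFun f) _ _ ?_ ?_ ?_ ?_ (ΦL.trans rfl)
      · rw [GD.src_comp _ _ dL, ← F.map_src, ηs]
      · rw [GD.tgt_comp _ _ dL, εtgt]
      · rw [GD.src_one]
      · rw [GD.tgt_one]
end
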